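/- arXiv:1210.0340 — 4 statements merged into one kernel-verified Lean document; each statement's English description precedes it below -/
import Mathlib

section
/- Let F be a finite family of subsets of a finite set U with q elements, and let r be a positive integer. If each element s of U is independently assigned a weight w(s) chosen uniformly at random from {1,...,r}, and the weight of a subset S is defined as the sum of weights of its elements, then the probability that there is a unique subset in F of minimum weight is at least 1 - q/r. -/
set_option autoImplicit false

open Finset

/-- **Isolation lemma** (Mulmuley–Vazirani–Vazirani).
If each element of a `q`-element set `U` is independently assigned a weight
uniformly at random from `{1,...,r}` (encoded as `w x + 1` for `w : U → Fin r`),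
and the weight of a subset is the sum of the weights of its elements, then the
probability that a nonempty family `F` of subsets of `U` contains a unique
subset of minimum weight is at least `1 - q/r`. -/
theorem isolation_lemma (U : Type*) [Fintype U] [DecidableEq U] (q : ℕ)
    (hq : Fintype.card U = q) (F : Finset (Finset U)) (hF : F.Nonempty)
    (r : ℕ) (hr : 0 < r) :
    (1 : ℚ) - (q : ℚ) / (r : ℚ) ≤
      ((Finset.univ.filter (fun w : U → Fin r =>
          ∃ S ∈ F, ∀ T ∈ F, T ≠ S →
            (∑ x ∈ S, ((w x : ℕ) + 1)) < ∑ x ∈ T, ((w x : ℕ) + 1))).card : ℚ)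
        / (Fintype.card (U → Fin r) : ℚ) := by
  classical
  set wt : (U → Fin r) → Finset U → ℕ := fun w S => ∑ x ∈ S, ((w x : ℕ) + 1) with hwt
  set G : Finset (U → Fin r) := Finset.univ.filter (fun w : U → Fin r =>
    ∃ S ∈ F, ∀ T ∈ F, T ≠ S →
      (∑ x ∈ S, ((w x : ℕ) + 1)) < ∑ x ∈ T, ((w x : ℕ) + 1)) with hG
  set gx : U → (U → Fin r) → ℕ∞ := fun x w =>
    (F.filter (fun A => x ∈ A)).inf
      (fun A => ((∑ y ∈ A.erase x, ((w y : ℕ) + 1) : ℕ) : ℕ∞)) with hgx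
  set hx : U → (U → Fin r) → ℕ∞ := fun x w =>
    (F.filter (fun A => x ∉ A)).inf (fun A => ((wt w A : ℕ) : ℕ∞)) with hhx
  set E : U → Finset (U → Fin r) := fun x => Finset.univ.filter
    (fun w => (F.filter (fun A => x ∈ A)).Nonempty ∧
      gx x w + (((w x : ℕ) + 1 : ℕ) : ℕ∞) = hx x w) with hE
  -- restriction off x determines membership data
  have gx_congr : ∀ (x : U) (w w' : U → Fin r), (∀ y, y ≠ x → w y = w' y) →
      gx x w = gx x w' := by
    intro x w w' hag
    apply Finset.inf_congr rfl
    intro A hA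
    congr 1
    apply Finset.sum_congr rfl
    intro y hy
    rw [hag y (Finset.ne_of_mem_erase hy)]
  have hx_congr : ∀ (x : U) (w w' : U → Fin r), (∀ y, y ≠ x → w y = w' y) →
      hx x w = hx x w' := by
    intro x w w' hag
    apply Finset.inf_congr rfl
    intro A hA
    rw [Finset.mem_filter] at hA
    congr 1
    apply Finset.sum_congr rfl
    intro y hy
    rw [hag y (fun h => hA.2 (h ▸ hy))]
  -- cardinality bound for each E x
  have hcard : ∀ x : U, (E x).card ≤ r ^ (q - 1) := by
    intro x
    have hinj : Set.InjOn (fun (w : U → Fin r) => fun y : {y : U // y ≠ x} => w y)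
        (E x : Set (U → Fin r)) := by
      intro w hw w' hw' hww'
      simp only [hE, Finset.coe_filter, Set.mem_setOf_eq, Finset.mem_univ, true_and] at hw hw'
      have hag : ∀ y, y ≠ x → w y = w' y := by
        intro y hy
        exact congrFun hww' ⟨y, hy⟩
      funext y
      by_cases hy : y = x
      · subst hy
        have h1 : gx y w = gx y w' := gx_congr y w w' hag
        have h2 : hx y w = hx y w' := hx_congr y w w' hag
        have hne : gx y w ≠ ⊤ := by
          obtain ⟨A, hA⟩ := hw.1
          have h3 : gx y w ≤ ((∑ z ∈ A.erase y, ((w z : ℕ) + 1) : ℕ) : ℕ∞) :=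
            Finset.inf_le (f := fun A => ((∑ z ∈ A.erase y, ((w z : ℕ) + 1) : ℕ) : ℕ∞)) hA
          exact ne_top_of_le_ne_top WithTop.coe_ne_top h3
        have := hw.2.trans (h2 ▸ (h1 ▸ hw'.2).symm)
        have hcanc := WithTop.add_left_cancel hne this
        have : (w y : ℕ) + 1 = (w' y : ℕ) + 1 := Nat.cast_inj.mp hcanc
        exact Fin.ext (by omega)
      · exact hag y hy
    have hle := Finset.card_le_card_of_injOn _ (fun w _ => Finset.mem_univ _) hinj
    calc (E x).card ≤ (Finset.univ : Finset ({y : U // y ≠ x} → Fin r)).card := hle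
      _ = r ^ (q - 1) := by
        rw [Finset.card_univ, Fintype.card_fun, Fintype.card_fin]
        congr 1
        rw [Fintype.card_subtype_compl, Fintype.card_subtype_eq, hq]
  -- key: bad w lies in some E x
  have key : ∀ (w : U → Fin r) (S T : Finset U), S ∈ F → T ∈ F →
      (∀ A ∈ F, wt w S ≤ wt w A) → wt w T = wt w S → ∀ x ∈ T, x ∉ S → w ∈ E x := by
    intro w S T hS hT hmin hTS x hxT hxS
    have hneF : (F.filter (fun A => x ∈ A)).Nonempty := ⟨T, Finset.mem_filter.mpr ⟨hT, hxT⟩⟩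
    rw [hE]
    refine Finset.mem_filter.mpr ⟨Finset.mem_univ _, hneF, ?_⟩
    have hhxm : hx x w = ((wt w S : ℕ) : ℕ∞) := by
      apply le_antisymm
      · exact Finset.inf_le (Finset.mem_filter.mpr ⟨hS, hxS⟩)
      · apply Finset.le_inf
        intro A hA
        exact_mod_cast hmin A (Finset.mem_filter.mp hA).1
    have hglow : ∀ A ∈ F.filter (fun A => x ∈ A),
        ((wt w S : ℕ) : ℕ∞) ≤ ((∑ y ∈ A.erase x, ((w y : ℕ) + 1) : ℕ) : ℕ∞) + (((w x : ℕ) + 1 : ℕ) : ℕ∞) := by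
      intro A hA
      rw [Finset.mem_filter] at hA
      rw [← Nat.cast_add, Finset.sum_erase_add _ _ hA.2]
      exact_mod_cast hmin A hA.1
    have hgle : gx x w + (((w x : ℕ) + 1 : ℕ) : ℕ∞) ≤ ((wt w S : ℕ) : ℕ∞) := by
      have h1 : gx x w ≤ ((∑ y ∈ T.erase x, ((w y : ℕ) + 1) : ℕ) : ℕ∞) :=
        Finset.inf_le (Finset.mem_filter.mpr ⟨hT, hxT⟩)
      calc gx x w + (((w x : ℕ) + 1 : ℕ) : ℕ∞)
          ≤ ((∑ y ∈ T.erase x, ((w y : ℕ) + 1) : ℕ) : ℕ∞) + (((w x : ℕ) + 1 : ℕ) : ℕ∞) :=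
            add_le_add h1 le_rfl
        _ = ((wt w T : ℕ) : ℕ∞) := by
            rw [← Nat.cast_add, Finset.sum_erase_add _ _ hxT]
        _ = ((wt w S : ℕ) : ℕ∞) := by rw [hTS]
    have hgge : ((wt w S : ℕ) : ℕ∞) ≤ gx x w + (((w x : ℕ) + 1 : ℕ) : ℕ∞) := by
      obtain ⟨A, hA, hAeq⟩ := Finset.exists_mem_eq_inf _ hneF
        (fun A => ((∑ y ∈ A.erase x, ((w y : ℕ) + 1) : ℕ) : ℕ∞))
      have hAle : gx x w = ((∑ y ∈ A.erase x, ((w y : ℕ) + 1) : ℕ) : ℕ∞) := hAeq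
      rw [hAle]
      exact hglow A hA
    rw [hhxm]
    exact le_antisymm hgle hgge
  have hsub : ∀ w : U → Fin r, w ∉ G → ∃ x, w ∈ E x := by
    intro w hw
    obtain ⟨S, hS, hSmin⟩ := Finset.exists_min_image F (wt w) hF
    rw [hG, Finset.mem_filter, not_and] at hw
    have hbad := hw (Finset.mem_univ _)
    push_neg at hbad
    obtain ⟨T, hT, hTne, hTle⟩ := hbad S hS
    have hTS : wt w T = wt w S := le_antisymm hTle (hSmin T hT)
    by_cases hsub : ∃ x ∈ T, x ∉ S
    · obtain ⟨x, hxT, hxS⟩ := hsub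
      exact ⟨x, key w S T hS hT hSmin hTS x hxT hxS⟩
    · push_neg at hsub
      have : ∃ x ∈ S, x ∉ T := by
        by_contra hc
        push_neg at hc
        exact hTne (Finset.Subset.antisymm hsub hc)
      obtain ⟨x, hxS, hxT⟩ := this
      have hTmin : ∀ A ∈ F, wt w T ≤ wt w A := fun A hA => hTS ▸ hSmin A hA
      exact ⟨x, key w T S hT hS hTmin hTS.symm x hxS hxT⟩
  -- counting
  have hcount : r ^ q ≤ G.card + q * r ^ (q - 1) := by
    have h1 : (Finset.univ : Finset (U → Fin r)) ⊆ G ∪ Finset.univ.biUnion E := by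
      intro w _
      by_cases hw : w ∈ G
      · exact Finset.mem_union_left _ hw
      · obtain ⟨x, hx⟩ := hsub w hw
        exact Finset.mem_union_right _ (Finset.mem_biUnion.mpr ⟨x, Finset.mem_univ _, hx⟩)
    have h2 := Finset.card_le_card h1
    have h3 : (Finset.univ.biUnion E).card ≤ ∑ x : U, (E x).card :=
      Finset.card_biUnion_le
    have h4 : ∑ x : U, (E x).card ≤ q * r ^ (q - 1) := by
      calc ∑ x : U, (E x).card ≤ ∑ _x : U, r ^ (q - 1) :=
            Finset.sum_le_sum (fun x _ => hcard x)
        _ = q * r ^ (q - 1) := by rw [Finset.sum_const, Finset.card_univ, hq, smul_eq_mul]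
    have h5 : (Finset.univ : Finset (U → Fin r)).card = r ^ q := by
      rw [Finset.card_univ, Fintype.card_fun, Fintype.card_fin, hq]
    calc r ^ q = (Finset.univ : Finset (U → Fin r)).card := h5.symm
      _ ≤ (G ∪ Finset.univ.biUnion E).card := h2
      _ ≤ G.card + (Finset.univ.biUnion E).card := Finset.card_union_le _ _
      _ ≤ G.card + q * r ^ (q - 1) := by omega
  -- final arithmetic
  have hcardfun : (Fintype.card (U → Fin r) : ℚ) = (r : ℚ) ^ q := by
    rw [Fintype.card_fun, Fintype.card_fin, hq]; push_cast; ring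
  rw [hcardfun]
  have hrQ : (0 : ℚ) < (r : ℚ) := by exact_mod_cast hr
  have hpow : (0 : ℚ) < (r : ℚ) ^ q := pow_pos hrQ q
  rw [le_div_iff₀ hpow]
  have hcQ : ((r : ℚ) ^ q : ℚ) ≤ (G.card : ℚ) + (q : ℚ) * (r : ℚ) ^ (q - 1) := by
    exact_mod_cast hcount
  rcases Nat.eq_zero_or_pos q with hq0 | hq1
  · subst hq0
    simp only [Nat.cast_zero, zero_div, sub_zero, pow_zero, one_mul, zero_mul,
      add_zero] at hcQ ⊢
    linarith
  · have hqe : q - 1 + 1 = q := Nat.succ_pred_eq_of_pos hq1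
    have hpe : (r : ℚ) ^ q = (r : ℚ) ^ (q - 1) * r := by
      rw [← pow_succ, hqe]
    have hdiv : (q : ℚ) / r * (r : ℚ) ^ q = (q : ℚ) * (r : ℚ) ^ (q - 1) := by
      rw [hpe]; field_simp
    have hexp : ((1 : ℚ) - (q : ℚ) / r) * (r : ℚ) ^ q
        = (r : ℚ) ^ q - (q : ℚ) * (r : ℚ) ^ (q - 1) := by
      rw [sub_mul, one_mul, hdiv]
    rw [hexp]
    linarith
end

section
/- With the setup of the suffix-swap involution φ on proper sets of walks: if the signature of a proper set S of walks is defined (i.e., two walks in S intersect), then φ(S) ≠ S, the walks of φ(S) have the same total length as those of S, and the multiset of edge occurrences over all walks of φ(S) equals that of S. -/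
set_option autoImplicit false

open scoped Classical

noncomputable section

variable {V : Type*}

/-- The list of edge occurrences of a walk given by its list of vertices. -/
def edgesOf (w : List V) : List (V × V) := w.zip w.tail

/-- `w` is a walk in the directed graph `E` from the source set `X` to the sink
set `Y`: it has at least two vertices, consecutive vertices are joined by edges,
its first vertex is in `X`, its last vertex is in `Y`, and all intermediate
vertices lie outside `X ∪ Y`. -/
def IsWalk (E : V → V → Prop) (X Y : Set V) (w : List V) : Prop :=
  2 ≤ w.length ∧ w.Chain' E ∧
    (∀ a, w.head? = some a → a ∈ X) ∧
    (∀ b, w.getLast? = some b → b ∈ Y) ∧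
    ∀ v ∈ w.tail.dropLast, v ∉ X ∧ v ∉ Y

/-- A proper (indexed) set of `k` walks: each member is a walk from `X` to `Y`,
and the walks have pairwise distinct start vertices and pairwise distinct end
vertices. -/
def Proper (E : V → V → Prop) (X Y : Set V) {k : ℕ} (S : Fin k → List V) : Prop :=
  (∀ i, IsWalk E X Y (S i)) ∧
    Function.Injective (fun i => (S i).head?) ∧
    Function.Injective (fun i => (S i).getLast?)

/-- The walks `S i` are pairwise vertex-disjoint. -/
def Disjointly {k : ℕ} (S : Fin k → List V) : Prop :=
  ∀ i j, i ≠ j → ∀ v, v ∈ S i → v ∉ S j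

/-- The total length of an indexed set of walks (each walk on `m` vertices has
length `m - 1`). -/
def totalLen {k : ℕ} (S : Fin k → List V) : ℕ := ∑ i, ((S i).length - 1)


/-- The pair `p = (i, j)` is a candidate signature of `S`: `i ≠ j`, the walks
`S i` and `S j` intersect, and the first vertex of `S i` lying on some other
walk of `S` is exactly the first vertex of `S i` lying on `S j`. -/
def SigProp {k : ℕ} (S : Fin k → List V) (p : Fin k × Fin k) : Prop :=
  p.1 ≠ p.2 ∧ (∃ v, v ∈ S p.1 ∧ v ∈ S p.2) ∧
    (S p.1).find? (fun v => decide (∃ j, j ≠ p.1 ∧ v ∈ S j))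
      = (S p.1).find? (fun v => decide (v ∈ S p.2))

/-- The signature of `S`: the lexicographically smallest pair `(i, j)`
satisfying `SigProp`, if one exists. -/
def signature {k : ℕ} (S : Fin k → List V) : Option (Fin k × Fin k) :=
  let s := (Finset.univ.filter (fun p : Fin k × Fin k => SigProp S p)).image toLex
  if h : s.Nonempty then some (ofLex (s.min' h)) else none

/-- Swap the suffixes of the two walks `w₁`, `w₂` at the vertex `v` (at the
first occurrence of `v` on each of them). -/
def swapAt (v : V) (w₁ w₂ : List V) : List V × List V :=
  (w₁.takeWhile (fun u => decide (u ≠ v)) ++ w₂.dropWhile (fun u => decide (u ≠ v)),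
   w₂.takeWhile (fun u => decide (u ≠ v)) ++ w₁.dropWhile (fun u => decide (u ≠ v)))

/-- The suffix-swap map `φ`: if `S` has a signature `(i, j)`, swap the suffixes
of `S i` and `S j` at the first vertex of `S i` lying on `S j`; otherwise `φ`
is the identity. -/
def phi {k : ℕ} (S : Fin k → List V) : Fin k → List V :=
  match signature S with
  | none => S
  | some (i, j) =>
    match (S i).find? (fun v => decide (v ∈ S j)) with
    | none => S
    | some v =>
        Function.update (Function.update S i (swapAt v (S i) (S j)).1) j
          (swapAt v (S i) (S j)).2



lemma find?_congr' {α : Type*} {p q : α → Bool} {v : α} :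
    ∀ {l : List α}, l.find? p = some v → q v = true →
      (∀ x, q x = true → p x = true) → l.find? q = some v := by
  intro l
  induction l with
  | nil => intro h; simp at h
  | cons a t ih =>
    intro h hq hpq
    by_cases hpa : p a = true
    · rw [List.find?_cons_of_pos hpa] at h
      cases h
      rw [List.find?_cons_of_pos hq]
    · have hqa : ¬ q a = true := fun h' => hpa (hpq a h')
      rw [List.find?_cons_of_neg hpa] at h
      rw [List.find?_cons_of_neg hqa]
      exact ih h hq hpq

lemma exists_sig {k : ℕ} (S : Fin k → List V)
    (hint : ∃ i j, i ≠ j ∧ ∃ v, v ∈ S i ∧ v ∈ S j) : ∃ p, SigProp S p := by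
  obtain ⟨i0, j0, hij, v0, hv1, hv2⟩ := hint
  have hsome : ((S i0).find? (fun u => decide (∃ j, j ≠ i0 ∧ u ∈ S j))).isSome := by
    rw [List.find?_isSome]
    exact ⟨v0, hv1, by simp only [decide_eq_true_eq]; exact ⟨j0, Ne.symm hij, hv2⟩⟩
  obtain ⟨v, hv⟩ := Option.isSome_iff_exists.mp hsome
  have hvmem : v ∈ S i0 := List.mem_of_find?_eq_some hv
  have hvP := List.find?_some hv
  simp only [decide_eq_true_eq] at hvP
  obtain ⟨j, hji, hvj⟩ := hvP
  refine ⟨(i0, j), Ne.symm hji, ⟨v, hvmem, hvj⟩, ?_⟩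
  rw [hv]
  exact (find?_congr' hv (by simp [hvj])
    (fun x hx => by simp only [decide_eq_true_eq] at hx ⊢; exact ⟨j, hji, hx⟩)).symm

lemma edgesOf_cons_cons (x b : V) (r : List V) :
    edgesOf (x :: b :: r) = (x, b) :: edgesOf (b :: r) := rfl

lemma edgesOf_append (v : V) (l : List V) :
    ∀ a : List V, edgesOf (a ++ v :: l) = edgesOf (a ++ [v]) ++ edgesOf (v :: l)
  | [] => by simp [edgesOf]
  | [x] => by simp [edgesOf]
  | x :: b :: a => by
    have ih := edgesOf_append v l (b :: a)
    simp only [List.cons_append] at ih ⊢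
    rw [edgesOf_cons_cons, edgesOf_cons_cons, ih, List.cons_append]

lemma sum_update₂ {α M : Type*} [AddCommMonoid M] {k : ℕ} (S : Fin k → α) (i j : Fin k)
    (hij : i ≠ j) (a b : α) (F : α → M) (h : F a + F b = F (S i) + F (S j)) :
    ∑ t, F (Function.update (Function.update S i a) j b t) = ∑ t, F (S t) := by
  classical
  have h1 : ∀ t, F (Function.update (Function.update S i a) j b t)
      = Function.update (fun t => F (Function.update S i a t)) j (F b) t := fun t =>
    Function.apply_update (fun _ x => F x) _ j b t
  have h2 : ∀ t, F (Function.update S i a t)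
      = Function.update (fun t => F (S t)) i (F a) t := fun t =>
    Function.apply_update (fun _ x => F x) _ i a t
  simp_rw [h1, h2]
  have hi : i ∈ Finset.univ \ ({j} : Finset (Fin k)) := by simp [hij]
  rw [Finset.sum_update_of_mem (Finset.mem_univ j), Finset.sum_update_of_mem hi,
    Finset.sum_eq_sum_sdiff_singleton_add (Finset.mem_univ j) (fun t => F (S t)),
    Finset.sum_eq_sum_sdiff_singleton_add hi (fun t => F (S t))]
  rw [← add_assoc, add_comm (F b) (F a), h]
  abel

/-- If the signature of a proper set `S` of walks is defined (i.e. two of its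
walks intersect), then `φ S ≠ S`, the walks of `φ S` have the same total
length as those of `S`, and the multiset of edge occurrences over all walks of
`φ S` equals that of `S`. -/
theorem phi_of_intersecting (E : V → V → Prop) (X Y : Set V) (hXY : Disjoint X Y)
    {k : ℕ} (S : Fin k → List V) (hS : Proper E X Y S)
    (hint : ∃ i j, i ≠ j ∧ ∃ v, v ∈ S i ∧ v ∈ S j) :
    phi S ≠ S ∧ totalLen (phi S) = totalLen S ∧
      (∑ i, (edgesOf (phi S i) : Multiset (V × V)))
        = ∑ i, (edgesOf (S i) : Multiset (V × V)) := by
  classical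
  obtain ⟨p0, hp0⟩ := exists_sig S hint
  set s := (Finset.univ.filter (fun p : Fin k × Fin k => SigProp S p)).image toLex with hs
  have hne : s.Nonempty :=
    ⟨toLex p0, Finset.mem_image_of_mem _ (Finset.mem_filter.mpr ⟨Finset.mem_univ _, hp0⟩)⟩
  set q : Fin k × Fin k := ofLex (s.min' hne) with hq
  have hsig : signature S = some q := by
    rw [signature]
    simp only [← hs]
    rw [dif_pos hne]
  have hqsig : SigProp S q := by
    have hm := Finset.min'_mem s hne
    obtain ⟨p, hp, hpe⟩ := Finset.mem_image.mp hm
    have : q = p := by rw [hq, ← hpe]; rfl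
    rw [this]
    exact (Finset.mem_filter.mp hp).2
  obtain ⟨hij, ⟨v0, hv01, hv02⟩, hfind_eq⟩ := hqsig
  have hfs : ((S q.1).find? (fun u => decide (u ∈ S q.2))).isSome :=
    List.find?_isSome.mpr ⟨v0, hv01, by simp [hv02]⟩
  obtain ⟨v, hv⟩ := Option.isSome_iff_exists.mp hfs
  have hphi : phi S = Function.update (Function.update S q.1 (swapAt v (S q.1) (S q.2)).1) q.2
      (swapAt v (S q.1) (S q.2)).2 := by
    rw [phi, hsig]
    show (match (S q.1).find? (fun u => decide (u ∈ S q.2)) with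
      | none => S
      | some v => Function.update (Function.update S q.1 (swapAt v (S q.1) (S q.2)).1) q.2
          (swapAt v (S q.1) (S q.2)).2) = _
    rw [hv]
  have hvmi : v ∈ S q.1 := List.mem_of_find?_eq_some hv
  have hvmj : v ∈ S q.2 := by
    have := List.find?_some hv
    simpa using this
  set pb : V → Bool := fun u => decide (u ≠ v) with hpb
  set t1 := (S q.1).takeWhile pb with ht1
  set d1 := (S q.1).dropWhile pb with hdd1
  set t2 := (S q.2).takeWhile pb with ht2
  set d2 := (S q.2).dropWhile pb with hdd2
  have hd1ne : d1 ≠ [] := by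
    intro h
    have := List.dropWhile_eq_nil_iff.mp h v hvmi
    simp [hpb] at this
  have hd2ne : d2 ≠ [] := by
    intro h
    have := List.dropWhile_eq_nil_iff.mp h v hvmj
    simp [hpb] at this
  have hd1head : d1.head hd1ne = v := by
    have h : pb (d1.head hd1ne) = false := List.head_dropWhile_not pb (l := S q.1) hd1ne
    rw [hpb] at h
    simpa using h
  have hd2head : d2.head hd2ne = v := by
    have h : pb (d2.head hd2ne) = false := List.head_dropWhile_not pb (l := S q.2) hd2ne
    rw [hpb] at h
    simpa using h
  have hd1 : d1 = v :: d1.tail := by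
    conv_lhs => rw [← List.cons_head_tail (l := d1) hd1ne, hd1head]
  have hd2 : d2 = v :: d2.tail := by
    conv_lhs => rw [← List.cons_head_tail (l := d2) hd2ne, hd2head]
  have hw1 : S q.1 = t1 ++ d1 := List.takeWhile_append_dropWhile.symm
  have hw2 : S q.2 = t2 ++ d2 := List.takeWhile_append_dropWhile.symm
  have hsw : swapAt v (S q.1) (S q.2) = (t1 ++ d2, t2 ++ d1) := rfl
  refine ⟨?_, ?_, ?_⟩
  · intro h
    have h1 : phi S q.1 = S q.1 := congrFun h q.1
    rw [hphi, hsw] at h1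
    simp only [Function.update_of_ne hij, Function.update_self] at h1
    rw [hw1] at h1
    have hdd : d2 = d1 := List.append_cancel_left h1
    have hd1some : d1.getLast?.isSome := by
      rw [Option.isSome_iff_ne_none]
      simpa using hd1ne
    obtain ⟨b, hb⟩ := Option.isSome_iff_exists.mp hd1some
    have hlast : (S q.2).getLast? = (S q.1).getLast? := by
      rw [hw1, hw2, hdd, List.getLast?_append, List.getLast?_append, hb]
      rfl
    exact hij ((hS.2.2 hlast).symm)
  · have h3 : 1 ≤ d1.length := List.length_pos_iff.mpr hd1ne
    have h4 : 1 ≤ d2.length := List.length_pos_iff.mpr hd2ne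
    have hlen : (t1 ++ d2).length - 1 + ((t2 ++ d1).length - 1)
        = ((S q.1).length - 1) + ((S q.2).length - 1) := by
      have h1 : (S q.1).length = t1.length + d1.length := by rw [hw1, List.length_append]
      have h2 : (S q.2).length = t2.length + d2.length := by rw [hw2, List.length_append]
      simp only [List.length_append]
      omega
    rw [totalLen, totalLen, hphi, hsw]
    exact sum_update₂ S q.1 q.2 hij _ _ (fun w => w.length - 1) hlen
  · have hkey : ((edgesOf (t1 ++ d2) : Multiset (V × V)))
        + ((edgesOf (t2 ++ d1) : Multiset (V × V)))
        = ((edgesOf (S q.1) : Multiset (V × V))) + ((edgesOf (S q.2) : Multiset (V × V))) := by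
      rw [hw1, hw2]
      conv_lhs => rw [hd1, hd2]
      conv_rhs => rw [hd1, hd2]
      rw [edgesOf_append v d2.tail t1, edgesOf_append v d1.tail t2,
        edgesOf_append v d1.tail t1, edgesOf_append v d2.tail t2]
      simp only [← Multiset.coe_add]
      abel
    rw [hphi, hsw]
    exact sum_update₂ S q.1 q.2 hij _ _ (fun w => (edgesOf w : Multiset (V × V))) hkey


end
end

section
/- Let G = (V,E) be a directed graph with m edges and edge costs c : E → {1,...,C}, and let X, Y be disjoint k-element vertex sets. For a positive integer r, modify each edge cost to c'(e) = c(e)·r·m + w(e), where the weights w(e) are drawn independently and uniformly at random from {1,...,r}. If there exists at least one set of k pairwise vertex-disjoint simple paths connecting X to Y, then with probability at least 1 − m/r there is a unique such set of minimum total c'-cost. -/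
set_option autoImplicit false

open scoped Classical

noncomputable section

variable {V : Type*}

/-- A set of `k` pairwise vertex-disjoint simple directed paths connecting `X`
to `Y`. -/
def IsPathSys (E : V → V → Prop) (X Y : Set V) (k : ℕ) (P : Finset (List V)) : Prop :=
  P.card = k ∧
    (∀ w ∈ P, w ≠ [] ∧ w.Chain' E ∧ w.Nodup ∧
      (∀ a, w.head? = some a → a ∈ X) ∧ (∀ b, w.getLast? = some b → b ∈ Y)) ∧
    ∀ w ∈ P, ∀ w' ∈ P, w ≠ w' → ∀ v, v ∈ w → v ∉ w'

/-- The total cost of a path system under the edge-cost function `c'`. -/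
def sysCost (c' : V × V → ℕ) (P : Finset (List V)) : ℕ :=
  ∑ w ∈ P, ((edgesOf w).map c').sum

namespace IsolationAux

lemma length_edgesOf (w : List V) : (edgesOf w).length = w.length - 1 := by
  simp [edgesOf, List.length_zip, List.length_tail]

lemma getElem_edgesOf (w : List V) (i : ℕ) (h : i < (edgesOf w).length) :
    (edgesOf w)[i] = (w[i]'(by rw [length_edgesOf] at h; omega),
      w[i+1]'(by rw [length_edgesOf] at h; omega)) := by
  simp [edgesOf, List.getElem_zip, List.getElem_tail]

lemma mem_edgesOf_iff {w : List V} {a b : V} :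
    (a, b) ∈ edgesOf w ↔ ∃ i, ∃ h : i + 1 < w.length, w[i] = a ∧ w[i + 1] = b := by
  rw [List.mem_iff_getElem]
  constructor
  · rintro ⟨i, hi, hab⟩
    rw [getElem_edgesOf] at hab
    exact ⟨i, by rw [length_edgesOf] at hi; omega,
      (congrArg Prod.fst hab), (congrArg Prod.snd hab)⟩
  · rintro ⟨i, hi, ha, hb⟩
    exact ⟨i, by rw [length_edgesOf]; omega, by rw [getElem_edgesOf]; simp [ha, hb]⟩

lemma fst_mem_of_mem_edgesOf {w : List V} {a b : V} (h : (a, b) ∈ edgesOf w) : a ∈ w := by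
  obtain ⟨i, hi, ha, -⟩ := mem_edgesOf_iff.1 h
  exact ha ▸ List.getElem_mem _

lemma snd_mem_of_mem_edgesOf {w : List V} {a b : V} (h : (a, b) ∈ edgesOf w) : b ∈ w := by
  obtain ⟨i, hi, -, hb⟩ := mem_edgesOf_iff.1 h
  exact hb ▸ List.getElem_mem _

lemma succ_unique {w : List V} (hw : w.Nodup) {a b b' : V}
    (h : (a, b) ∈ edgesOf w) (h' : (a, b') ∈ edgesOf w) : b = b' := by
  obtain ⟨i, hi, ha, hb⟩ := mem_edgesOf_iff.1 h
  obtain ⟨j, hj, ha', hb'⟩ := mem_edgesOf_iff.1 h'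
  have : i = j := (hw.getElem_inj_iff).1 (ha.trans ha'.symm)
  subst this
  exact hb.symm.trans hb'

lemma not_edge_of_getLast {w : List V} (hw : w.Nodup) {a b : V}
    (ha : w.getLast? = some a) : (a, b) ∉ edgesOf w := by
  intro h
  obtain ⟨i, hi, hia, -⟩ := mem_edgesOf_iff.1 h
  have hne : w ≠ [] := by rintro rfl; simp at ha
  have hlast : w.getLast hne = a := by
    rw [List.getLast?_eq_getLast hne] at ha; exact Option.some_injective _ ha
  rw [List.getLast_eq_getElem] at hlast
  have : i = w.length - 1 := (hw.getElem_inj_iff).1 (hia.trans hlast.symm)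
  omega

lemma not_edge_to_head {w : List V} (hw : w.Nodup) {a x : V}
    (ha : w.head? = some a) : (x, a) ∉ edgesOf w := by
  intro h
  obtain ⟨i, hi, -, hia⟩ := mem_edgesOf_iff.1 h
  have hne : w ≠ [] := by rintro rfl; simp at ha
  have hhead : w.head hne = a := by
    rw [List.head?_eq_head hne] at ha; exact Option.some_injective _ ha
  rw [List.head_eq_getElem] at hhead
  have : i + 1 = 0 := (hw.getElem_inj_iff).1 (hia.trans hhead.symm)
  omega

lemma nodup_edgesOf {w : List V} (hw : w.Nodup) : (edgesOf w).Nodup := by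
  rw [List.nodup_iff_injective_getElem]
  intro i j hij
  simp only [getElem_edgesOf] at hij
  have : (i : ℕ) = (j : ℕ) := (hw.getElem_inj_iff).1 (congrArg Prod.fst hij)
  exact Fin.ext this

lemma chain'_of_mem_edgesOf {R : V → V → Prop} {w : List V} (hw : w.Chain' R) {a b : V}
    (h : (a, b) ∈ edgesOf w) : R a b := by
  obtain ⟨i, hi, ha, hb⟩ := mem_edgesOf_iff.1 h
  subst ha hb
  exact List.isChain_iff_getElem.1 hw i (by omega)

lemma mem_edgesOf_cons {s : List V} {x : V} {e : V × V} (h : e ∈ edgesOf s) :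
    e ∈ edgesOf (x :: s) := by
  cases s with
  | nil => simp [edgesOf] at h
  | cons y t => simp only [edgesOf, List.tail_cons, List.zip_cons_cons] at h ⊢; exact .tail _ h

lemma mem_edgesOf_of_suffix {w q : List V} (h : w <:+ q) {e : V × V} (he : e ∈ edgesOf w) :
    e ∈ edgesOf q := by
  obtain ⟨l, rfl⟩ := h
  induction l with
  | nil => exact he
  | cons x l ih => exact mem_edgesOf_cons ih

variable [DecidableEq V]

/-- The set of edges used by a path system. -/
def edgeSet (P : Finset (List V)) : Finset (V × V) :=
  P.biUnion fun w => (edgesOf w).toFinset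

lemma mem_edgeSet {P : Finset (List V)} {e : V × V} :
    e ∈ edgeSet P ↔ ∃ w ∈ P, e ∈ edgesOf w := by
  simp [edgeSet]

section sys

variable {E : V → V → Prop} {X Y : Set V} {k k' : ℕ} {P Q : Finset (List V)}

lemma mem_unique (hP : IsPathSys E X Y k P) {w w' : List V} (hw : w ∈ P) (hw' : w' ∈ P)
    {v : V} (hv : v ∈ w) (hv' : v ∈ w') : w = w' := by
  by_contra hne
  exact hP.2.2 w hw w' hw' hne v hv hv'

lemma sysCost_eq_sum (hP : IsPathSys E X Y k P) (g : V × V → ℕ) :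
    sysCost g P = ∑ e ∈ edgeSet P, g e := by
  rw [edgeSet, Finset.sum_biUnion]
  · refine Finset.sum_congr rfl fun w hw => ?_
    exact (List.sum_toFinset g (nodup_edgesOf (hP.2.1 w hw).2.2.1)).symm
  · intro w hw w' hw' hne
    simp only [Function.onFun]
    rw [Finset.disjoint_left]
    rintro ⟨a, b⟩ he he'
    rw [List.mem_toFinset] at he he'
    exact hP.2.2 w hw w' hw' hne a (fst_mem_of_mem_edgesOf he) (fst_mem_of_mem_edgesOf he')

lemma edgeSet_no_succ_of_getLast (hP : IsPathSys E X Y k P) {p : List V} (hp : p ∈ P)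
    {a b : V} (ha : p.getLast? = some a) : (a, b) ∉ edgeSet P := by
  intro h
  obtain ⟨p', hp', he⟩ := mem_edgeSet.1 h
  have hap' : a ∈ p' := fst_mem_of_mem_edgesOf he
  have hap : a ∈ p := List.mem_of_getLast? ha
  have : p' = p := mem_unique hP hp' hp hap' hap
  subst this
  exact not_edge_of_getLast (hP.2.1 p' hp).2.2.1 ha he

lemma edgeSet_no_pred_of_head (hP : IsPathSys E X Y k P) {p : List V} (hp : p ∈ P)
    {a x : V} (ha : p.head? = some a) : (x, a) ∉ edgeSet P := by
  intro h
  obtain ⟨p', hp', he⟩ := mem_edgeSet.1 h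
  have hap' : a ∈ p' := snd_mem_of_mem_edgesOf he
  have hap : a ∈ p := List.mem_of_mem_head? ha
  have : p' = p := mem_unique hP hp' hp hap' hap
  subst this
  exact not_edge_to_head (hP.2.1 p' hp).2.2.1 ha he

lemma recon (hP : IsPathSys E X Y k P) (hQ : IsPathSys E X Y k' Q)
    (hPQ : edgeSet P = edgeSet Q) :
    ∀ w : List V, (∃ p ∈ P, w <:+ p) → ∀ w', (∃ q ∈ Q, w' <:+ q) →
      w ≠ [] → w' ≠ [] → w.head? = w'.head? → w = w' := by
  intro w
  induction w with
  | nil => intro _ _ _ h _ _; exact absurd rfl h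
  | cons a t ih =>
    rintro ⟨p, hp, hwp⟩ w' ⟨q, hq, hw'q⟩ _ hw' hhead
    obtain ⟨a', t', rfl⟩ := List.exists_cons_of_ne_nil hw'
    have haa : a = a' := by
      simp only [List.head?_cons, Option.some.injEq] at hhead; exact hhead
    subst haa
    cases t with
    | nil =>
      -- w = [a]; a is the last vertex of p, hence has no successor in edgeSet P = edgeSet Q
      cases t' with
      | nil => rfl
      | cons b t'' =>
        exfalso
        have hlast : p.getLast? = some a := by
          obtain ⟨l, rfl⟩ := hwp
          simp [List.getLast?_append]
        have hedge : (a, b) ∈ edgeSet Q := by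
          refine mem_edgeSet.2 ⟨q, hq, mem_edgesOf_of_suffix hw'q ?_⟩
          exact mem_edgesOf_iff.2 ⟨0, by simp, rfl, rfl⟩
        exact edgeSet_no_succ_of_getLast hP hp hlast (hPQ ▸ hedge)
    | cons b s =>
      have hedgeb : (a, b) ∈ edgeSet P :=
        mem_edgeSet.2 ⟨p, hp, mem_edgesOf_of_suffix hwp
          (mem_edgesOf_iff.2 ⟨0, by simp, rfl, rfl⟩)⟩
      cases t' with
      | nil =>
        exfalso
        have hlast : q.getLast? = some a := by
          obtain ⟨l, rfl⟩ := hw'q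
          simp [List.getLast?_append]
        exact edgeSet_no_succ_of_getLast hQ hq hlast (hPQ.symm ▸ hedgeb)
      | cons b' t'' =>
        -- the successor of a is unique in q, so b' = b
        obtain ⟨q₂, hq₂, he₂⟩ := mem_edgeSet.1 (hPQ ▸ hedgeb)
        have haq₂ : a ∈ q₂ := fst_mem_of_mem_edgesOf he₂
        have haq : a ∈ q := hw'q.subset (by simp)
        have : q₂ = q := mem_unique hQ hq₂ hq haq₂ haq
        subst this
        have hedgeb' : (a, b') ∈ edgesOf q₂ :=
          mem_edgesOf_of_suffix hw'q (mem_edgesOf_iff.2 ⟨0, by simp, rfl, rfl⟩)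
        have hbb : b = b' := succ_unique (hQ.2.1 q₂ hq₂).2.2.1 he₂ hedgeb'
        subst hbb
        have htail : b :: s = b :: t'' := by
          refine ih ⟨p, hp, ?_⟩ (b :: t'') ⟨q₂, hq₂, ?_⟩ (by simp) (by simp) rfl
          · exact (List.suffix_cons a (b :: s)).trans hwp
          · exact (List.suffix_cons a (b :: t'')).trans hw'q
        rw [htail]

lemma eq_of_edgeSet_eq (hXY : Disjoint X Y) (hP : IsPathSys E X Y k P)
    (hQ : IsPathSys E X Y k Q) (h : edgeSet P = edgeSet Q) : P = Q := by
  have hsub : P ⊆ Q := by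
    intro p hp
    obtain ⟨hpne, -, hnd, hhX, hlY⟩ := hP.2.1 p hp
    obtain ⟨a, t, rfl⟩ := List.exists_cons_of_ne_nil hpne
    have haX : a ∈ X := hhX a rfl
    -- p has at least two vertices
    obtain ⟨b, s, rfl⟩ : ∃ b s, t = b :: s := by
      cases t with
      | nil => exact absurd (hlY a rfl) (Set.disjoint_left.1 hXY haX)
      | cons b s => exact ⟨b, s, rfl⟩
    have hedge : (a, b) ∈ edgeSet Q :=
      h ▸ mem_edgeSet.2 ⟨_, hp, mem_edgesOf_iff.2 ⟨0, by simp, rfl, rfl⟩⟩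
    obtain ⟨q, hq, he⟩ := mem_edgeSet.1 hedge
    -- a must be the head of q
    obtain ⟨i, hi, hia, -⟩ := mem_edgesOf_iff.1 he
    have hi0 : i = 0 := by
      by_contra hne
      obtain ⟨j, rfl⟩ : ∃ j, i = j + 1 := ⟨i - 1, by omega⟩
      have hpred : (q[j]'(by omega), a) ∈ edgeSet P :=
        h.symm ▸ mem_edgeSet.2 ⟨q, hq, mem_edgesOf_iff.2 ⟨j, by omega, rfl, hia⟩⟩
      exact edgeSet_no_pred_of_head hP hp rfl hpred
    subst hi0
    have hqne : q ≠ [] := (hQ.2.1 q hq).1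
    have hqhead : q.head? = some a := by
      rw [List.head?_eq_head hqne, List.head_eq_getElem]
      exact congrArg some hia
    have : a :: b :: s = q :=
      recon hP hQ h _ ⟨_, hp, List.suffix_refl _⟩ q ⟨q, hq, List.suffix_refl _⟩
        (by simp) hqne (by rw [hqhead]; rfl)
    exact this ▸ hq
  exact Finset.eq_of_subset_of_card_le hsub (by rw [hP.1, hQ.1])

lemma edgeSet_subset {F : Finset (V × V)}
    (hP : IsPathSys (fun u v => (u, v) ∈ F) X Y k P) : edgeSet P ⊆ F := by
  rintro ⟨a, b⟩ he
  obtain ⟨w, hw, hew⟩ := mem_edgeSet.1 he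
  exact chain'_of_mem_edgesOf (hP.2.1 w hw).2.1 hew

end sys


theorem isol_abstract {V : Type*} [Fintype V] [DecidableEq V]
    (E : Finset (V × V)) (m : ℕ) (hm : E.card = m) (r : ℕ) (hr : 0 < r)
    (Sys : Finset (List V) → Prop) (hex : ∃ P, Sys P)
    (hinj : ∀ P Q, Sys P → Sys Q → edgeSet P = edgeSet Q → P = Q)
    (hsub : ∀ P, Sys P → edgeSet P ⊆ E)
    (hcost : ∀ (g : V × V → ℕ) P, Sys P → sysCost g P = ∑ e ∈ edgeSet P, g e)
    (wt : (V × V → Fin r) → (V × V) → ℕ)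
    (hwt1 : ∀ (ω ω' : V × V → Fin r) (x), ω x = ω' x → wt ω x = wt ω' x)
    (hwt2 : ∀ (e : V × V) (ω ω' : V × V → Fin r), wt ω e = wt ω' e → ω e = ω' e) :
    (1 : ℚ) - (m : ℚ) / (r : ℚ) ≤
      ((Finset.univ.filter (fun ω : V × V → Fin r =>
          ∃ P, Sys P ∧ ∀ Q, Sys Q → Q ≠ P →
            sysCost (wt ω) P < sysCost (wt ω) Q)).card : ℚ)
        / (Fintype.card (V × V → Fin r) : ℚ) := by
  classical
  set N := Fintype.card (V × V → Fin r) with hNdef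
  set μ : (V × V → Fin r) → ℕ := fun ω => sInf {n | ∃ P, Sys P ∧ sysCost (wt ω) P = n}
    with hμdef
  have hμmem : ∀ ω, ∃ P, Sys P ∧ sysCost (wt ω) P = μ ω := by
    intro ω
    obtain ⟨P, hP⟩ := hex
    exact Nat.sInf_mem (⟨sysCost (wt ω) P, P, hP, rfl⟩ :
      {n | ∃ P, Sys P ∧ sysCost (wt ω) P = n}.Nonempty)
  have hμle : ∀ ω P, Sys P → μ ω ≤ sysCost (wt ω) P := fun ω P hP => Nat.sInf_le ⟨P, hP, rfl⟩
  set Sng : (V × V → Fin r) → (V × V) → Prop := fun ω e =>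
    (∃ P, Sys P ∧ sysCost (wt ω) P = μ ω ∧ e ∈ edgeSet P) ∧
    (∃ Q, Sys Q ∧ sysCost (wt ω) Q = μ ω ∧ e ∉ edgeSet Q) with hSngdef
  -- if no edge is singular, the minimizer is unique
  have goodOf : ∀ ω : V × V → Fin r, (∀ e ∈ E, ¬Sng ω e) →
      ∃ P, Sys P ∧ ∀ Q, Sys Q → Q ≠ P → sysCost (wt ω) P < sysCost (wt ω) Q := by
    intro ω hns
    obtain ⟨P₀, hP₀, hc₀⟩ := hμmem ω
    refine ⟨P₀, hP₀, fun Q hQ hne => ?_⟩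
    rcases lt_or_eq_of_le (hμle ω Q hQ) with hlt | heq
    · rw [hc₀]; exact hlt
    · exfalso
      have hES : edgeSet Q ≠ edgeSet P₀ := fun hE => hne (hinj Q P₀ hQ hP₀ hE)
      have hexists : ∃ e, (e ∈ edgeSet Q ∧ e ∉ edgeSet P₀) ∨
          (e ∈ edgeSet P₀ ∧ e ∉ edgeSet Q) := by
        by_contra hno
        push_neg at hno
        refine hES (Finset.ext fun e => ?_)
        have := hno e
        tauto
      obtain ⟨e, he⟩ := hexists
      have heE : e ∈ E := by
        rcases he with ⟨h1, -⟩ | ⟨h1, -⟩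
        · exact hsub Q hQ h1
        · exact hsub P₀ hP₀ h1
      refine hns e heE ?_
      rcases he with ⟨h1, h2⟩ | ⟨h1, h2⟩
      · exact ⟨⟨Q, hQ, heq.symm, h1⟩, ⟨P₀, hP₀, hc₀, h2⟩⟩
      · exact ⟨⟨P₀, hP₀, hc₀, h1⟩, ⟨Q, hQ, heq.symm, h2⟩⟩
  -- singularity of an edge determines the weight at that edge
  have determ : ∀ (e : V × V) (ω ω' : V × V → Fin r), (∀ z, z ≠ e → ω z = ω' z) →
      Sng ω e → Sng ω' e → ω e = ω' e := by
    rintro e ω ω' hoff ⟨⟨P, hP, hPμ, hPe⟩, ⟨Q, hQ, hQμ, hQe⟩⟩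
      ⟨⟨P', hP', hP'μ, hP'e⟩, ⟨Q', hQ', hQ'μ, hQ'e⟩⟩
    have hsame : ∀ R : Finset (List V), Sys R → e ∉ edgeSet R →
        sysCost (wt ω) R = sysCost (wt ω') R := by
      intro R hR heR
      rw [hcost _ _ hR, hcost _ _ hR]
      exact Finset.sum_congr rfl fun z hz => hwt1 ω ω' z (hoff z (fun h => heR (h ▸ hz)))
    have hμeq : μ ω = μ ω' := by
      have h1 : μ ω ≤ μ ω' := by
        rw [← hQ'μ, ← hsame Q' hQ' hQ'e]; exact hμle ω Q' hQ'
      have h2 : μ ω' ≤ μ ω := by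
        rw [← hQμ, hsame Q hQ hQe]; exact hμle ω' Q hQ
      omega
    have hsplit : ∀ (σ : V × V → Fin r) (R : Finset (List V)), Sys R → e ∈ edgeSet R →
        sysCost (wt σ) R = (∑ z ∈ (edgeSet R).erase e, wt σ z) + wt σ e := by
      intro σ R hR heR
      rw [hcost _ _ hR, ← Finset.sum_erase_add _ _ heR]
    have hdiffsame : ∀ R : Finset (List V),
        (∑ z ∈ (edgeSet R).erase e, wt ω z) = ∑ z ∈ (edgeSet R).erase e, wt ω' z :=
      fun R => Finset.sum_congr rfl fun z hz =>
        hwt1 ω ω' z (hoff z (Finset.mem_erase.1 hz).1)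
    have e1 : (∑ z ∈ (edgeSet P).erase e, wt ω z) + wt ω e = μ ω := by
      rw [← hPμ, hsplit ω P hP hPe]
    have e2 : (∑ z ∈ (edgeSet P').erase e, wt ω z) + wt ω' e = μ ω' := by
      rw [← hP'μ, hsplit ω' P' hP' hP'e, ← hdiffsame P']
    have e3 : μ ω' ≤ (∑ z ∈ (edgeSet P).erase e, wt ω z) + wt ω' e := by
      have h := hμle ω' P hP
      rw [hsplit ω' P hP hPe, ← hdiffsame P] at h
      exact h
    have e4 : μ ω ≤ (∑ z ∈ (edgeSet P').erase e, wt ω z) + wt ω e := by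
      have h := hμle ω P' hP'
      rw [hsplit ω P' hP' hP'e] at h
      exact h
    exact hwt2 e ω ω' (by omega)
  -- the number of weight assignments making a given edge singular
  have keycount : ∀ e ∈ E, (Finset.univ.filter fun ω : V × V → Fin r => Sng ω e).card * r ≤ N := by
    intro e he
    have hmaps : ∀ p ∈ ((Finset.univ.filter fun ω : V × V → Fin r => Sng ω e) ×ˢ
        (Finset.univ : Finset (Fin r))),
        (Function.update p.1 e p.2 : V × V → Fin r) ∈ (Finset.univ : Finset (V × V → Fin r)) :=
      fun _ _ => Finset.mem_univ _
    have hinj2 : Set.InjOn (fun p : (V × V → Fin r) × Fin r => Function.update p.1 e p.2)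
        (((Finset.univ.filter fun ω : V × V → Fin r => Sng ω e) ×ˢ
          (Finset.univ : Finset (Fin r)) : Finset _) : Set _) := by
      rintro ⟨ω, x⟩ hp ⟨ω', x'⟩ hq heq
      rw [Finset.mem_coe, Finset.mem_product, Finset.mem_filter] at hp hq
      have hx : x = x' := by
        have h := congrFun heq e
        simpa using h
      have hoff : ∀ z, z ≠ e → ω z = ω' z := fun z hz => by
        have h := congrFun heq z
        simpa [Function.update_of_ne hz] using h
      have hee : ω e = ω' e := determ e ω ω' hoff hp.1.2 hq.1.2
      have hωeq : ω = ω' := funext fun z => by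
        by_cases hz : z = e
        · subst hz; exact hee
        · exact hoff z hz
      simp [hωeq, hx]
    have hcard := Finset.card_le_card_of_injOn _ hmaps hinj2
    rw [Finset.card_product, Finset.card_univ, Finset.card_univ, Fintype.card_fin] at hcard
    rw [hNdef]
    exact hcard
  set Bad : Finset (V × V → Fin r) := Finset.univ.filter fun ω => ∃ e ∈ E, Sng ω e with hBadDef
  have hBadcard : Bad.card * r ≤ m * N := by
    have hsub2 : Bad ⊆ E.biUnion fun e => Finset.univ.filter fun ω => Sng ω e := by
      intro ω hω
      rw [hBadDef, Finset.mem_filter] at hω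
      obtain ⟨-, e, he, hs⟩ := hω
      exact Finset.mem_biUnion.2 ⟨e, he, Finset.mem_filter.2 ⟨Finset.mem_univ _, hs⟩⟩
    calc Bad.card * r
        ≤ (∑ e ∈ E, (Finset.univ.filter fun ω : V × V → Fin r => Sng ω e).card) * r :=
          Nat.mul_le_mul_right r ((Finset.card_le_card hsub2).trans Finset.card_biUnion_le)
      _ = ∑ e ∈ E, (Finset.univ.filter fun ω : V × V → Fin r => Sng ω e).card * r :=
          Finset.sum_mul _ _ _
      _ ≤ ∑ _e ∈ E, N := Finset.sum_le_sum keycount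
      _ = m * N := by rw [Finset.sum_const, hm, smul_eq_mul]
  set Gd := Finset.univ.filter (fun ω : V × V → Fin r =>
      ∃ P, Sys P ∧ ∀ Q, Sys Q → Q ≠ P → sysCost (wt ω) P < sysCost (wt ω) Q) with hGdDef
  have hcover : (Finset.univ : Finset (V × V → Fin r)) ⊆ Gd ∪ Bad := by
    intro ω _
    by_cases hb : ∃ e ∈ E, Sng ω e
    · exact Finset.mem_union_right _ (Finset.mem_filter.2 ⟨Finset.mem_univ _, hb⟩)
    · push_neg at hb
      exact Finset.mem_union_left _ (Finset.mem_filter.2 ⟨Finset.mem_univ _, goodOf ω hb⟩)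
  have hNle : N ≤ Gd.card + Bad.card :=
    calc N = (Finset.univ : Finset (V × V → Fin r)).card := Finset.card_univ.symm
      _ ≤ (Gd ∪ Bad).card := Finset.card_le_card hcover
      _ ≤ Gd.card + Bad.card := Finset.card_union_le _ _
  have hNpos : 0 < N := by
    have : Nonempty (V × V → Fin r) := ⟨fun _ => ⟨0, hr⟩⟩
    exact Fintype.card_pos
  have hNQ : (0 : ℚ) < (N : ℚ) := by exact_mod_cast hNpos
  have hrQ : (0 : ℚ) < (r : ℚ) := by exact_mod_cast hr
  rw [le_div_iff₀ hNQ]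
  have hq1 : (Bad.card : ℚ) * r ≤ (m : ℚ) * N := by exact_mod_cast hBadcard
  have hq2 : (N : ℚ) ≤ (Gd.card : ℚ) + (Bad.card : ℚ) := by exact_mod_cast hNle
  have hq3 : (Bad.card : ℚ) ≤ (m : ℚ) * N / r := (le_div_iff₀ hrQ).2 hq1
  have hq4 : (1 - (m : ℚ) / r) * N = (N : ℚ) - (m : ℚ) * N / r := by ring
  linarith

end IsolationAux



/-- **Isolation for path systems.**  Modify each edge cost to
`c' e = c e * r * m + w e` where the weights `w e = ω e + 1 ∈ {1,...,r}` are
drawn independently and uniformly at random.  If at least one set of `k`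
pairwise vertex-disjoint simple paths connecting `X` to `Y` exists, then with
probability at least `1 - m / r` there is a unique such set of minimum total
`c'`-cost. -/
theorem isolation_for_path_systems (V : Type*) [Fintype V] [DecidableEq V]
    (E : Finset (V × V)) (m : ℕ) (hm : E.card = m)
    (C : ℕ) (c : V × V → ℕ) (hc : ∀ e ∈ E, c e ∈ Finset.Icc 1 C)
    (X Y : Set V) (hXY : Disjoint X Y) (k : ℕ) (r : ℕ) (hr : 0 < r)
    (hex : ∃ P, IsPathSys (fun u v => (u, v) ∈ E) X Y k P) :
    (1 : ℚ) - (m : ℚ) / (r : ℚ) ≤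
      ((Finset.univ.filter (fun ω : V × V → Fin r =>
          ∃ P, IsPathSys (fun u v => (u, v) ∈ E) X Y k P ∧
            ∀ Q, IsPathSys (fun u v => (u, v) ∈ E) X Y k Q → Q ≠ P →
              sysCost (fun e => c e * r * m + ((ω e : ℕ) + 1)) P <
                sysCost (fun e => c e * r * m + ((ω e : ℕ) + 1)) Q)).card : ℚ)
        / (Fintype.card (V × V → Fin r) : ℚ) := by
  exact IsolationAux.isol_abstract E m hm r hr
    (fun P => IsPathSys (fun u v => (u, v) ∈ E) X Y k P) hex
    (fun P Q hP hQ h => IsolationAux.eq_of_edgeSet_eq hXY hP hQ h)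
    (fun P hP => IsolationAux.edgeSet_subset hP)
    (fun g P hP => IsolationAux.sysCost_eq_sum hP g)
    (fun ω e => c e * r * m + ((ω e : ℕ) + 1))
    (fun ω ω' x h => by rw [h])
    (fun e ω ω' h => by
      have hv : (ω e : ℕ) = (ω' e : ℕ) := by omega
      exact Fin.ext hv)

end
end

section
/- Let G be a directed graph on n vertices with disjoint k-element sets X, Y, and suppose the fixed points of the suffix-swap involution φ on proper sets of k walks of total length at most l are exactly the proper sets of pairwise vertex-disjoint walks. Then the map sending a proper set of pairwise vertex-disjoint simple paths to its family of edge-multiplicity monomials is injective: two distinct proper sets of pairwise vertex-disjoint simple paths of total length at most l yield distinct monomials \prod_{W ∈ S} M_W. -/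
set_option autoImplicit false

open scoped Classical

noncomputable section

variable {V : Type*}

/-- The monomial `M_W` of a walk `W`. -/
def walkMonomial (F : Type*) [Field F] (w : List V) : MvPolynomial (V × V) F :=
  (edgesOf w).map (fun e => MvPolynomial.X e) |>.prod

section Aux

variable {V : Type*}

lemma edgesOf_cons₂ (x y : V) (l : List V) :
    edgesOf (x :: y :: l) = (x, y) :: edgesOf (y :: l) := rfl

lemma mem_of_mem_edgesOf {a b : V} {w : List V} (h : (a, b) ∈ edgesOf w) :
    a ∈ w ∧ b ∈ w := by
  have := List.of_mem_zip h
  exact ⟨this.1, List.mem_of_mem_tail this.2⟩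

lemma edge_unique : ∀ (w : List V), w.Nodup → ∀ {a b c : V},
    (a, b) ∈ edgesOf w → (a, c) ∈ edgesOf w → b = c
  | [], _, _, _, _, h1, _ => by simp [edgesOf] at h1
  | [x], _, _, _, _, h1, _ => by simp [edgesOf] at h1
  | x :: y :: t, hnd, a, b, c, h1, h2 => by
    rw [edgesOf_cons₂, List.mem_cons] at h1 h2
    have hx : x ∉ y :: t := (List.nodup_cons.mp hnd).1
    rcases h1 with h1 | h1
    · rcases h2 with h2 | h2
      · rw [Prod.mk.injEq] at h1 h2
        rw [h1.2, h2.2]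
      · exfalso
        obtain ⟨rfl, rfl⟩ := Prod.mk.injEq .. ▸ h1
        exact hx (mem_of_mem_edgesOf h2).1
    · rcases h2 with h2 | h2
      · exfalso
        obtain ⟨rfl, rfl⟩ := Prod.mk.injEq .. ▸ h2
        exact hx (mem_of_mem_edgesOf h1).1
      · exact edge_unique (y :: t) (List.nodup_cons.mp hnd).2 h1 h2

lemma chase (Y : Set V) (occ : V × V → Prop)
    (hf : ∀ a b c, occ (a, b) → occ (a, c) → b = c) :
    ∀ (w1 w2 : List V), w1.head? = w2.head? →
    (∀ e ∈ edgesOf w1, occ e) → (∀ e ∈ edgesOf w2, occ e) →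
    (∀ v ∈ w1.dropLast, v ∉ Y) → (∀ v ∈ w2.dropLast, v ∉ Y) →
    (∀ b, w1.getLast? = some b → b ∈ Y) → (∀ b, w2.getLast? = some b → b ∈ Y) →
    w1 = w2 := by
  intro w1
  induction w1 with
  | nil =>
    intro w2 hh _ _ _ _ _ _
    simp only [List.head?_nil] at hh
    cases w2 with
    | nil => rfl
    | cons b t => simp at hh
  | cons a t1 ih =>
    intro w2 hh he1 he2 hd1 hd2 hl1 hl2
    cases w2 with
    | nil => simp at hh
    | cons b t2 =>
      simp only [List.head?_cons, Option.some.injEq] at hh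
      subst hh
      cases t1 with
      | nil =>
        have haY : a ∈ Y := hl1 a rfl
        cases t2 with
        | nil => rfl
        | cons b2 t2' =>
          exact absurd haY (hd2 a (by simp [List.dropLast]))
      | cons a2 t1' =>
        have haY : a ∉ Y := hd1 a (by simp [List.dropLast])
        cases t2 with
        | nil => exact absurd (hl2 a rfl) haY
        | cons b2 t2' =>
          have h1 : occ (a, a2) := he1 _ (by rw [edgesOf_cons₂]; exact List.mem_cons_self)
          have h2 : occ (a, b2) := he2 _ (by rw [edgesOf_cons₂]; exact List.mem_cons_self)
          have hab : a2 = b2 := hf a a2 b2 h1 h2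
          subst hab
          have := ih (a2 :: t2')
            rfl
            (fun e he => he1 e (by rw [edgesOf_cons₂]; exact List.mem_cons_of_mem _ he))
            (fun e he => he2 e (by rw [edgesOf_cons₂]; exact List.mem_cons_of_mem _ he))
            (fun v hv => hd1 v (by simp [List.dropLast, hv]))
            (fun v hv => hd2 v (by simp [List.dropLast, hv]))
            (fun b hb => hl1 b (by rw [List.getLast?_cons_cons]; exact hb))
            (fun b hb => hl2 b (by rw [List.getLast?_cons_cons]; exact hb))
          rw [this]

end Aux


section Aux2

variable {V : Type*}

lemma isWalk_dropLast_not_Y {E : V → V → Prop} {X Y : Set V} (hXY : Disjoint X Y)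
    {w : List V} (hw : IsWalk E X Y w) : ∀ v ∈ w.dropLast, v ∉ Y := by
  obtain ⟨hlen, _, hhead, _, hmid⟩ := hw
  rcases hSi : w with _ | ⟨x, _ | ⟨y, t⟩⟩
  · simp
  · rw [hSi] at hlen; simp at hlen
  · rw [hSi] at hhead hmid
    intro v hv
    simp only [List.dropLast, List.mem_cons] at hv
    rcases hv with rfl | hv
    · exact Set.disjoint_left.mp hXY (hhead v rfl)
    · exact (hmid v (by simpa using hv)).2

lemma head?_eq_of_mem_X {E : V → V → Prop} {X Y : Set V} (hXY : Disjoint X Y)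
    {w : List V} (hw : IsWalk E X Y w) {a : V} (ha : a ∈ w) (haX : a ∈ X) :
    w.head? = some a := by
  obtain ⟨hlen, _, hhead, hlast, hmid⟩ := hw
  rcases hSi : w with _ | ⟨x, _ | ⟨y, t⟩⟩
  · rw [hSi] at ha; simp at ha
  · rw [hSi] at hlen; simp at hlen
  · rw [hSi] at ha hlast hmid
    rw [List.mem_cons] at ha
    rcases ha with rfl | ha
    · rfl
    · exfalso
      have hne : (y :: t) ≠ [] := List.cons_ne_nil _ _
      rw [← List.dropLast_append_getLast hne, List.mem_append] at ha
      rcases ha with ha | ha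
      · exact (hmid a (by simpa using ha)).1 haX
      · rw [List.mem_singleton] at ha
        subst ha
        have : (x :: y :: t).getLast? = some ((y :: t).getLast hne) := by
          rw [List.getLast?_eq_getLast (List.cons_ne_nil _ _),
            List.getLast_cons hne]
        exact Set.disjoint_left.mp hXY haX (hlast _ this)

lemma range_subset_of_edges {k : ℕ} {E : V → V → Prop} {X Y : Set V}
    (hXY : Disjoint X Y) (S T : Fin k → List V)
    (hS : Proper E X Y S) (hT : Proper E X Y T) (hTd : Disjointly T)
    (hTs : ∀ i, (T i).Nodup)
    (hedge : ∀ e, (∃ i, e ∈ edgesOf (S i)) → (∃ j, e ∈ edgesOf (T j))) :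
    Set.range S ⊆ Set.range T := by
  rintro _ ⟨i, rfl⟩
  have hf : ∀ a b c, (∃ j, (a, b) ∈ edgesOf (T j)) →
      (∃ j, (a, c) ∈ edgesOf (T j)) → b = c := by
    rintro a b c ⟨j, hj⟩ ⟨j', hj'⟩
    rcases eq_or_ne j j' with rfl | hne
    · exact edge_unique _ (hTs j) hj hj'
    · exact absurd (mem_of_mem_edgesOf hj').1
        (hTd j j' hne a (mem_of_mem_edgesOf hj).1)
  obtain ⟨hlen, _, hhead, hlast, hmid⟩ := hS.1 i
  obtain ⟨a, a2, t, hw⟩ : ∃ a a2 t, S i = a :: a2 :: t := by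
    rcases hSi : S i with _ | ⟨a, _ | ⟨a2, t⟩⟩
    · rw [hSi] at hlen; simp at hlen
    · rw [hSi] at hlen; simp at hlen
    · exact ⟨a, a2, t, rfl⟩
  have haX : a ∈ X := hhead a (by rw [hw]; rfl)
  obtain ⟨j, hj⟩ : ∃ j, (a, a2) ∈ edgesOf (T j) :=
    hedge (a, a2) ⟨i, by rw [hw, edgesOf_cons₂]; exact List.mem_cons_self⟩
  have haTj : a ∈ T j := (mem_of_mem_edgesOf hj).1
  have hheadT : (T j).head? = some a := head?_eq_of_mem_X hXY (hT.1 j) haTj haX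
  have heq : S i = T j := by
    refine chase Y (fun e => ∃ j, e ∈ edgesOf (T j)) hf (S i) (T j) ?_
      (fun e he => hedge e ⟨i, he⟩) (fun e he => ⟨j, he⟩)
      (isWalk_dropLast_not_Y hXY (hS.1 i)) (isWalk_dropLast_not_Y hXY (hT.1 j))
      (hS.1 i).2.2.2.1 (hT.1 j).2.2.2.1
    rw [hheadT, hw]; rfl
  exact ⟨j, heq.symm⟩

open MvPolynomial in
lemma multiset_prod_X {F : Type*} [Field F] (m : Multiset (V × V)) :
    (m.map (X : V × V → MvPolynomial (V × V) F)).prod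
      = monomial m.toFinsupp 1 := by
  induction m using Multiset.induction with
  | empty => simp
  | cons a m ih =>
    rw [Multiset.map_cons, Multiset.prod_cons, ih, ← Multiset.singleton_add,
      Multiset.toFinsupp_add, Multiset.toFinsupp_singleton,
      show (X a : MvPolynomial (V × V) F) = monomial (Finsupp.single a 1) 1 from rfl,
      monomial_mul, one_mul]

open MvPolynomial in
lemma prod_walkMonomial {F : Type*} [Field F] {k : ℕ} (S : Fin k → List V) :
    (∏ i, walkMonomial F (S i))
      = monomial (∑ i, ((edgesOf (S i) : Multiset (V × V)))).toFinsupp 1 := by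
  rw [← multiset_prod_X,
    show Multiset.map X (∑ i, ((edgesOf (S i) : Multiset (V × V))))
      = ∑ i, Multiset.map (X : V × V → MvPolynomial (V × V) F) (edgesOf (S i)) from
    map_sum (Multiset.mapAddMonoidHom X) _ _, Multiset.prod_sum]
  refine Finset.prod_congr rfl fun i _ => ?_
  rw [walkMonomial, Multiset.map_coe, Multiset.prod_coe]

end Aux2

/-- Suppose the fixed points of the suffix-swap involution `φ` on proper sets
of `k` walks of total length at most `l` are exactly the proper sets of
pairwise vertex-disjoint walks.  Then, on proper sets of pairwise
vertex-disjoint *simple* paths of total length at most `l`, the associated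
monomial `∏_{W ∈ S} M_W` determines the set of paths: two such sets with equal
monomials consist of the same paths. -/
theorem monomial_injective_on_disjoint_simple_paths
    (E : V → V → Prop) (X Y : Set V) (hXY : Disjoint X Y) [Fintype V]
    (n : ℕ) (hn : Fintype.card V = n) (k l : ℕ)
    (F : Type*) [Field F] [CharP F 2]
    (hfix : ∀ S : Fin k → List V, Proper E X Y S → totalLen S ≤ l →
      (phi S = S ↔ Disjointly S))
    (S T : Fin k → List V)
    (hS : Proper E X Y S) (hSd : Disjointly S) (hSs : ∀ i, (S i).Nodup)
    (hSl : totalLen S ≤ l)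
    (hT : Proper E X Y T) (hTd : Disjointly T) (hTs : ∀ i, (T i).Nodup)
    (hTl : totalLen T ≤ l)
    (hmono : (∏ i, walkMonomial F (S i)) = ∏ i, walkMonomial F (T i)) :
    Set.range S = Set.range T := by
  have hS2 := prod_walkMonomial (F := F) S
  have hT2 := prod_walkMonomial (F := F) T
  rw [hS2, hT2] at hmono
  have hfs := MvPolynomial.monomial_left_injective (one_ne_zero (α := F)) hmono
  have hms : (∑ i, ((edgesOf (S i) : Multiset (V × V))))
      = ∑ i, ((edgesOf (T i) : Multiset (V × V))) :=
    Multiset.toFinsupp.injective hfs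
  have hedge1 : ∀ e, (∃ i, e ∈ edgesOf (S i)) → (∃ j, e ∈ edgesOf (T j)) := by
    intro e ⟨i, hi⟩
    have : e ∈ ∑ i, ((edgesOf (T i) : Multiset (V × V))) := by
      rw [← hms, Multiset.mem_sum]
      exact ⟨i, Finset.mem_univ i, by simpa using hi⟩
    rw [Multiset.mem_sum] at this
    obtain ⟨j, _, hj⟩ := this
    exact ⟨j, by simpa using hj⟩
  have hedge2 : ∀ e, (∃ i, e ∈ edgesOf (T i)) → (∃ j, e ∈ edgesOf (S j)) := by
    intro e ⟨i, hi⟩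
    have : e ∈ ∑ i, ((edgesOf (S i) : Multiset (V × V))) := by
      rw [hms, Multiset.mem_sum]
      exact ⟨i, Finset.mem_univ i, by simpa using hi⟩
    rw [Multiset.mem_sum] at this
    obtain ⟨j, _, hj⟩ := this
    exact ⟨j, by simpa using hj⟩
  exact Set.Subset.antisymm
    (range_subset_of_edges hXY S T hS hT hTd hTs hedge1)
    (range_subset_of_edges hXY T S hT hS hSd hSs hedge2)


end
end
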